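/- Let h > 0, a, b ∈ ℝ, and let ζ : ℕ → ℝ satisfy (k(k−1) + a·k + b)·ζ_k = 0 for every k ∈ ℕ. Define u : ℕ → ℝ by u_n = Σ_{k=0}^{n} (n! · h^k / (n−k)!) · ζ_k. Then u solves the discrete Euler equation: for every natural number n ≥ 2, (n² + (a−1)n + b)·u_n − n(a + 2n − 2)·u_{n−1} + n(n−1)·u_{n−2} = 0. -/

import Mathlib

lemma euler_key (a b h : ℝ) (z : ℝ) (k j : ℕ)
    (hz : ((k : ℝ) * ((k : ℝ) - 1) + a * k + b) * z = 0) :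
    (((k+j+2:ℕ):ℝ)^2 + (a-1)*((k+j+2:ℕ):ℝ) + b) *
        (((k+j+2).factorial:ℝ) * h^k / (((j+2).factorial:ℕ):ℝ) * z)
    - ((k+j+2:ℕ):ℝ) * (a + 2*((k+j+2:ℕ):ℝ) - 2) *
        (((k+j+1).factorial:ℝ) * h^k / (((j+1).factorial:ℕ):ℝ) * z)
    + ((k+j+2:ℕ):ℝ) * (((k+j+2:ℕ):ℝ) - 1) *
        (((k+j).factorial:ℝ) * h^k / ((j.factorial:ℕ):ℝ) * z) = 0 := by
  have hF : ((k+j).factorial:ℝ) ≠ 0 := by positivity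
  have hG : ((j.factorial:ℕ):ℝ) ≠ 0 := by positivity
  have e1 : ((k+j+2).factorial:ℝ) = ((k:ℝ)+j+2) * (((k:ℝ)+j+1) * ((k+j).factorial:ℝ)) := by
    rw [show k+j+2 = (k+j+1)+1 from rfl, Nat.factorial_succ, Nat.factorial_succ]
    push_cast; ring
  have e2 : ((k+j+1).factorial:ℝ) = ((k:ℝ)+j+1) * ((k+j).factorial:ℝ) := by
    rw [Nat.factorial_succ]; push_cast; ring
  have e3 : (((j+2).factorial:ℕ):ℝ) = ((j:ℝ)+2) * (((j:ℝ)+1) * ((j.factorial:ℕ):ℝ)) := by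
    rw [show j+2 = (j+1)+1 from rfl, Nat.factorial_succ, Nat.factorial_succ]
    push_cast; ring
  have e4 : (((j+1).factorial:ℕ):ℝ) = ((j:ℝ)+1) * ((j.factorial:ℕ):ℝ) := by
    rw [Nat.factorial_succ]; push_cast; ring
  calc (((k+j+2:ℕ):ℝ)^2 + (a-1)*((k+j+2:ℕ):ℝ) + b) *
        (((k+j+2).factorial:ℝ) * h^k / (((j+2).factorial:ℕ):ℝ) * z)
    - ((k+j+2:ℕ):ℝ) * (a + 2*((k+j+2:ℕ):ℝ) - 2) *
        (((k+j+1).factorial:ℝ) * h^k / (((j+1).factorial:ℕ):ℝ) * z)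
    + ((k+j+2:ℕ):ℝ) * (((k+j+2:ℕ):ℝ) - 1) *
        (((k+j).factorial:ℝ) * h^k / ((j.factorial:ℕ):ℝ) * z)
      = (((k : ℝ) * ((k : ℝ) - 1) + a * k + b) * z) *
        (((k+j+2).factorial:ℝ) * h^k / (((j+2).factorial:ℕ):ℝ)) := by
        rw [e1, e2, e3, e4]; push_cast; field_simp; ring
    _ = 0 := by rw [hz, zero_mul]

/-- If `(k(k-1)+ak+b) ζ_k = 0` for all `k`, then
`u_n = Σ_{k=0}^n (n! h^k/(n-k)!) ζ_k` solves the discrete Euler equation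
`(n²+(a-1)n+b) u_n - n(a+2n-2) u_{n-1} + n(n-1) u_{n-2} = 0` for all `n ≥ 2`. -/
theorem stmt_10 (h : ℝ) (hh : 0 < h) (a b : ℝ) (ζ : ℕ → ℝ)
    (hζ : ∀ k : ℕ, ((k : ℝ) * ((k : ℝ) - 1) + a * k + b) * ζ k = 0)
    (u : ℕ → ℝ)
    (hu : ∀ n, u n = ∑ k ∈ Finset.range (n + 1),
      (Nat.factorial n : ℝ) * h ^ k / (Nat.factorial (n - k) : ℝ) * ζ k) :
    ∀ n : ℕ, 2 ≤ n →
      ((n : ℝ) ^ 2 + (a - 1) * n + b) * u n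
        - (n : ℝ) * (a + 2 * n - 2) * u (n - 1)
        + (n : ℝ) * ((n : ℝ) - 1) * u (n - 2) = 0 := by
  intro n hn
  obtain ⟨m, rfl⟩ : ∃ m, n = m + 2 := ⟨n - 2, by omega⟩
  set A : ℝ := ((m + 2 : ℕ) : ℝ) ^ 2 + (a - 1) * ((m + 2 : ℕ) : ℝ) + b with hA
  set B : ℝ := ((m + 2 : ℕ) : ℝ) * (a + 2 * ((m + 2 : ℕ) : ℝ) - 2) with hB
  set C : ℝ := ((m + 2 : ℕ) : ℝ) * (((m + 2 : ℕ) : ℝ) - 1) with hC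
  have h1 : m + 2 - 1 = m + 1 := rfl
  have h2 : m + 2 - 2 = m := rfl
  rw [h1, h2, hu (m+2), hu (m+1), hu m]
  -- peel the top terms off the first two sums
  rw [show m + 2 + 1 = (m + 2) + 1 from rfl]
  rw [Finset.sum_range_succ (fun k => ((m+2).factorial : ℝ) * h ^ k /
        ((m + 2 - k).factorial : ℝ) * ζ k) (m+2)]
  rw [Finset.sum_range_succ (fun k => ((m+2).factorial : ℝ) * h ^ k /
        ((m + 2 - k).factorial : ℝ) * ζ k) (m+1)]
  rw [Finset.sum_range_succ (fun k => ((m+1).factorial : ℝ) * h ^ k /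
        ((m + 1 - k).factorial : ℝ) * ζ k) (m+1)]
  simp only [mul_add]
  have main : A * (∑ k ∈ Finset.range (m+1), ((m+2).factorial : ℝ) * h ^ k /
        ((m + 2 - k).factorial : ℝ) * ζ k)
      - B * (∑ k ∈ Finset.range (m+1), ((m+1).factorial : ℝ) * h ^ k /
        ((m + 1 - k).factorial : ℝ) * ζ k)
      + C * (∑ k ∈ Finset.range (m+1), ((m).factorial : ℝ) * h ^ k /
        ((m - k).factorial : ℝ) * ζ k) = 0 := by
    rw [Finset.mul_sum, Finset.mul_sum, Finset.mul_sum, ← Finset.sum_sub_distrib,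
      ← Finset.sum_add_distrib]
    apply Finset.sum_eq_zero
    intro k hk
    have hkm : k ≤ m := by simpa [Nat.lt_succ_iff] using hk
    obtain ⟨j, rfl⟩ : ∃ j, m = k + j := ⟨m - k, by omega⟩
    have r2 : k + j + 2 - k = j + 2 := by omega
    have r1 : k + j + 1 - k = j + 1 := by omega
    have r0 : k + j - k = j := by omega
    rw [r2, r1, r0, hA, hB, hC]
    exact euler_key a b h (ζ k) k j (hζ k)
  -- boundary terms
  have bd2 : A * (((m+2).factorial : ℝ) * h ^ (m+2) /
        ((m + 2 - (m+2)).factorial : ℝ) * ζ (m+2)) = 0 := by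
    have : A = ((m+2:ℕ) : ℝ) * (((m+2:ℕ):ℝ) - 1) + a * ((m+2:ℕ):ℝ) + b := by
      rw [hA]; push_cast; ring
    rw [this, mul_comm (((m+2).factorial : ℝ) * h ^ (m+2) /
        ((m + 2 - (m+2)).factorial : ℝ)) (ζ (m+2)), ← mul_assoc, hζ (m+2), zero_mul]
  have bd1 : A * (((m+2).factorial : ℝ) * h ^ (m+1) /
        ((m + 2 - (m+1)).factorial : ℝ) * ζ (m+1))
      - B * (((m+1).factorial : ℝ) * h ^ (m+1) /
        ((m + 1 - (m+1)).factorial : ℝ) * ζ (m+1)) = 0 := by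
    have rr : m + 2 - (m+1) = 1 := by omega
    have rr' : m + 1 - (m+1) = 0 := by omega
    have ef : ((m+2).factorial : ℝ) = ((m:ℝ)+2) * ((m+1).factorial : ℝ) := by
      rw [show m+2 = (m+1)+1 from rfl, Nat.factorial_succ]; push_cast; ring
    have key : A * (((m:ℝ)+2)) - B = (((m+1:ℕ):ℝ) * (((m+1:ℕ):ℝ) - 1) + a * ((m+1:ℕ):ℝ) + b)
        * ((m:ℝ)+2) := by
      rw [hA, hB]; push_cast; ring
    rw [rr, rr', ef]
    have : A * (((m:ℝ)+2) * ((m+1).factorial : ℝ) * h ^ (m+1) / ((Nat.factorial 1 : ℕ) : ℝ) * ζ (m+1))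
        - B * (((m+1).factorial : ℝ) * h ^ (m+1) / ((Nat.factorial 0 : ℕ) : ℝ) * ζ (m+1))
        = (A * ((m:ℝ)+2) - B) * (((m+1).factorial : ℝ) * h ^ (m+1) * ζ (m+1)) := by
      norm_num [Nat.factorial]; ring
    rw [this, key, mul_assoc, mul_comm (((m+1).factorial : ℝ) * h ^ (m+1)) (ζ (m+1)),
      ← mul_assoc, ← mul_assoc, mul_comm _ ((m:ℝ)+2), mul_assoc ((m:ℝ)+2), hζ (m+1)]
    ring
  linarith [main, bd2, bd1]
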